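/- arXiv:2504.17905 — 2 statements merged into one kernel-verified Lean document; each statement's English description precedes it below -/
import Mathlib

section
/- For real k with 1 < k < 2, and real numbers a_j, b_j ≥ 0 and q_v ≥ 0 such that for some index v either (∏_{j≤v} a_j^k b_j^{2−k})·q_v² ≥ c > 0 (with q_v ≥ 1) or ∏_{j≤R} a_j^k b_j^{2−k} ≥ c > 0 holds, one has (∑_{v=0}^R (∏_{j≤v} a_j) q_v²)^{k/2} · (∑_{v=0}^R (∏_{j≤v} b_j) q_v²)^{(2−k)/2} ≥ c', where c' > 0 depends only on c and k. (This is the key pointwise inequality, via Hölder's inequality with exponents 2/k and 2/(2−k), used in the upper bounds principle.) -/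
/-- The key pointwise inequality (via Hölder with exponents `2/k` and `2/(2−k)`)
in the upper bounds principle: if for some `v ≤ R` either
`(∏_{j≤v} a_j^k b_j^{2−k})·q_{v+1}² ≥ c` with `q_{v+1} ≥ 1`, or
`∏_{j≤R} a_j^k b_j^{2−k} ≥ c` (with `q_{R+1} = 1`), then
`(∑_v (∏_{j≤v} a_j) q_{v+1}²)^{k/2} (∑_v (∏_{j≤v} b_j) q_{v+1}²)^{(2−k)/2} ≥ c'`,
with `c' > 0` depending only on `c` and `k`. -/
theorem stmt_6 (k c : ℝ) (hk1 : 1 < k) (hk2 : k < 2) (hc : 0 < c) :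
    ∃ c' > (0 : ℝ), ∀ (R : ℕ) (a b q : ℕ → ℝ),
      (∀ j, 0 ≤ a j) → (∀ j, 0 ≤ b j) → (∀ v, 0 ≤ q v) → q (R + 1) = 1 →
      ((∃ v ≤ R, 1 ≤ q (v + 1) ∧
          c ≤ (∏ j ∈ Finset.range v, (a j) ^ k * (b j) ^ (2 - k)) * (q (v + 1)) ^ 2) ∨
        c ≤ ∏ j ∈ Finset.range R, (a j) ^ k * (b j) ^ (2 - k)) →
      c' ≤ (∑ v ∈ Finset.range (R + 1),
              (∏ j ∈ Finset.range v, a j) * (q (v + 1)) ^ 2) ^ (k / 2) *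
           (∑ v ∈ Finset.range (R + 1),
              (∏ j ∈ Finset.range v, b j) * (q (v + 1)) ^ 2) ^ ((2 - k) / 2) := by
  refine ⟨Real.sqrt c, Real.sqrt_pos.mpr hc, ?_⟩
  intro R a b q ha hb hq hqR h
  obtain ⟨v, hvR, hQ1, hcle⟩ : ∃ v ≤ R, 1 ≤ q (v + 1) ∧
      c ≤ (∏ j ∈ Finset.range v, (a j) ^ k * (b j) ^ (2 - k)) * (q (v + 1)) ^ 2 := by
    rcases h with h | h
    · exact h
    · exact ⟨R, le_refl R, by rw [hqR], by rw [hqR]; simpa using h⟩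
  set A := ∏ j ∈ Finset.range v, a j with hA
  set B := ∏ j ∈ Finset.range v, b j with hB
  set Q := q (v + 1) with hQ
  have hA0 : 0 ≤ A := Finset.prod_nonneg fun j _ => ha j
  have hB0 : 0 ≤ B := Finset.prod_nonneg fun j _ => hb j
  have hQ0 : (0 : ℝ) ≤ Q := hq _
  have hk0 : (0 : ℝ) < k := by linarith
  have hk2' : (0 : ℝ) < 2 - k := by linarith
  have hprod : (∏ j ∈ Finset.range v, (a j) ^ k * (b j) ^ (2 - k))
      = A ^ k * B ^ (2 - k) := by
    rw [Finset.prod_mul_distrib, hA, hB,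
      Real.finset_prod_rpow _ _ (fun j _ => ha j),
      Real.finset_prod_rpow _ _ (fun j _ => hb j)]
  rw [hprod] at hcle
  set Sa := ∑ v ∈ Finset.range (R + 1), (∏ j ∈ Finset.range v, a j) * (q (v + 1)) ^ 2
  set Sb := ∑ v ∈ Finset.range (R + 1), (∏ j ∈ Finset.range v, b j) * (q (v + 1)) ^ 2
  have hmem : v ∈ Finset.range (R + 1) := Finset.mem_range.mpr (by omega)
  have hSa : A * Q ^ 2 ≤ Sa :=
    Finset.single_le_sum (f := fun i => (∏ j ∈ Finset.range i, a j) * (q (i + 1)) ^ 2)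
      (fun i _ => mul_nonneg (Finset.prod_nonneg fun j _ => ha j) (sq_nonneg _)) hmem
  have hSb : B * Q ^ 2 ≤ Sb :=
    Finset.single_le_sum (f := fun i => (∏ j ∈ Finset.range i, b j) * (q (i + 1)) ^ 2)
      (fun i _ => mul_nonneg (Finset.prod_nonneg fun j _ => hb j) (sq_nonneg _)) hmem
  have hAQ0 : 0 ≤ A * Q ^ 2 := mul_nonneg hA0 (sq_nonneg _)
  have hBQ0 : 0 ≤ B * Q ^ 2 := mul_nonneg hB0 (sq_nonneg _)
  have hSa0 : 0 ≤ Sa := hAQ0.trans hSa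
  have hSb0 : 0 ≤ Sb := hBQ0.trans hSb
  have hS0 : 0 ≤ Sa ^ (k / 2) * Sb ^ ((2 - k) / 2) :=
    mul_nonneg (Real.rpow_nonneg hSa0 _) (Real.rpow_nonneg hSb0 _)
  -- it suffices that c ≤ S²
  have key : c ≤ (Sa ^ (k / 2) * Sb ^ ((2 - k) / 2)) ^ 2 := by
    have hsq : (Sa ^ (k / 2) * Sb ^ ((2 - k) / 2)) ^ 2 = Sa ^ k * Sb ^ (2 - k) := by
      rw [mul_pow, ← Real.rpow_natCast (Sa ^ (k / 2)) 2,
        ← Real.rpow_natCast (Sb ^ ((2 - k) / 2)) 2,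
        ← Real.rpow_mul hSa0, ← Real.rpow_mul hSb0]
      norm_num
    rw [hsq]
    have h1 : (A * Q ^ 2) ^ k * (B * Q ^ 2) ^ (2 - k) ≤ Sa ^ k * Sb ^ (2 - k) :=
      mul_le_mul (Real.rpow_le_rpow hAQ0 hSa hk0.le)
        (Real.rpow_le_rpow hBQ0 hSb hk2'.le)
        (Real.rpow_nonneg hBQ0 _) (Real.rpow_nonneg hSa0 _)
    refine le_trans ?_ h1
    rw [Real.mul_rpow hA0 (sq_nonneg _), Real.mul_rpow hB0 (sq_nonneg _)]
    have hQ2 : (1 : ℝ) ≤ Q ^ 2 := one_le_pow₀ hQ1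
    have hQ2pos : (0 : ℝ) < Q ^ 2 := by linarith
    have hQexp : (Q ^ 2) ^ k * (Q ^ 2) ^ (2 - k) = (Q ^ 2) ^ (2 : ℝ) := by
      rw [← Real.rpow_add hQ2pos]; norm_num
    calc c ≤ A ^ k * B ^ (2 - k) * Q ^ 2 := hcle
      _ ≤ A ^ k * B ^ (2 - k) * (Q ^ 2) ^ (2 : ℝ) := by
          refine mul_le_mul_of_nonneg_left ?_
            (mul_nonneg (Real.rpow_nonneg hA0 _) (Real.rpow_nonneg hB0 _))
          rw [Real.rpow_two]; nlinarith
      _ = A ^ k * (Q ^ 2) ^ k * (B ^ (2 - k) * (Q ^ 2) ^ (2 - k)) := by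
          rw [← hQexp]; ring
  calc Real.sqrt c ≤ Real.sqrt ((Sa ^ (k / 2) * Sb ^ ((2 - k) / 2)) ^ 2) :=
        Real.sqrt_le_sqrt key
    _ = Sa ^ (k / 2) * Sb ^ ((2 - k) / 2) := Real.sqrt_sq hS0
end

section
/- For a prime p and real c with |c| < 1, ∑_{a,b ≥ 0} p^{min(a,b)−a−b} τ_0(p^{a−min(a,b)}) τ_0(p^{b−min(a,b)}) c^{a+b}/(a! b!) = 1 + (4c + c²)/p + O(1/p²), where the implied constant is absolute. -/
noncomputable def tauZero (l : ℕ) : ℝ :=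
  ∏ p ∈ l.primeFactors,
    (1 + (l.factorization p : ℝ) * (1 - 1 / (p : ℝ)) / (1 + 1 / (p : ℝ)))

lemma tauZero_prime_pow {p : ℕ} (hp : p.Prime) (ν : ℕ) :
    tauZero (p ^ ν) = 1 + (ν : ℝ) * (1 - 1 / p) / (1 + 1 / p) := by
  rcases Nat.eq_zero_or_pos ν with h | h
  · simp [h, tauZero]
  · unfold tauZero
    rw [Nat.primeFactors_prime_pow h.ne' hp, Nat.Prime.factorization_pow hp]
    simp

lemma tauZero_bounds {p : ℕ} (hp : p.Prime) (ν : ℕ) :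
    0 ≤ tauZero (p ^ ν) ∧ tauZero (p ^ ν) ≤ 1 + ν := by
  have hp1 : (1:ℝ) ≤ p := by exact_mod_cast hp.one_lt.le
  have h0 : (0:ℝ) ≤ 1 - 1 / p := by
    have : (1:ℝ)/p ≤ 1 := by rw [div_le_one (by linarith)]; exact hp1
    linarith
  have h1 : (1:ℝ) ≤ 1 + 1 / p := by
    have : (0:ℝ) ≤ 1/p := by positivity
    linarith
  have hfrac : (1 - 1/(p:ℝ)) / (1 + 1/p) ≤ 1 := by
    rw [div_le_one (by linarith)]
    have : (0:ℝ) ≤ 1/p := by positivity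
    linarith
  have hfrac0 : 0 ≤ (1 - 1/(p:ℝ)) / (1 + 1/p) := by positivity
  rw [tauZero_prime_pow hp]
  have hν : (0:ℝ) ≤ ν := Nat.cast_nonneg ν
  constructor
  · have : 0 ≤ (ν:ℝ) * (1 - 1/p) / (1+1/p) := by positivity
    linarith
  · have : (ν:ℝ) * (1 - 1/p) / (1+1/p) ≤ ν := by
      rw [mul_div_assoc]; nlinarith
    linarith

/-- The local factor of the mollified fourth moment Euler product satisfies
`∑_{a,b ≥ 0} p^{min(a,b)−a−b} τ_0(p^{a−min}) τ_0(p^{b−min}) c^{a+b}/(a!b!)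
 = 1 + (4c + c²)/p + O(1/p²)`, with an absolute implied constant. -/
theorem stmt_9 :
    ∃ C > (0 : ℝ), ∀ (p : ℕ), p.Prime → ∀ c : ℝ, |c| < 1 →
      |(∑' ab : ℕ × ℕ,
          ((p : ℝ) ^ (min ab.1 ab.2) / (p : ℝ) ^ (ab.1 + ab.2)) *
            tauZero (p ^ (ab.1 - min ab.1 ab.2)) * tauZero (p ^ (ab.2 - min ab.1 ab.2)) *
            c ^ (ab.1 + ab.2) / ((ab.1.factorial : ℝ) * (ab.2.factorial : ℝ))) -
         (1 + (4 * c + c ^ 2) / (p : ℝ))| ≤ C / (p : ℝ) ^ 2 := by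
  classical
  refine ⟨100, by norm_num, fun p hp c hc => ?_⟩
  have hp2 : (2:ℝ) ≤ (p:ℝ) := by exact_mod_cast hp.two_le
  have hp0 : (0:ℝ) < p := by linarith
  have hpne : (p:ℝ) ≠ 0 := ne_of_gt hp0
  have hq1 : (1:ℝ)/p ≤ 1 := by rw [div_le_one hp0]; linarith
  have hq0 : (0:ℝ) ≤ 1/p := by positivity
  have hc1 : |c| ≤ 1 := hc.le
  set f : ℕ × ℕ → ℝ := fun ab =>
    ((p : ℝ) ^ (min ab.1 ab.2) / (p : ℝ) ^ (ab.1 + ab.2)) *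
      tauZero (p ^ (ab.1 - min ab.1 ab.2)) * tauZero (p ^ (ab.2 - min ab.1 ab.2)) *
      c ^ (ab.1 + ab.2) / ((ab.1.factorial : ℝ) * (ab.2.factorial : ℝ)) with hfdef
  set g : ℕ → ℝ := fun n => (2:ℝ) ^ n / n.factorial with hgdef
  have hgsum : Summable g := Real.summable_pow_div_factorial 2
  have hgnn : ∀ n, 0 ≤ g n := fun n => by rw [hgdef]; positivity
  have hG : Summable (fun ab : ℕ × ℕ => g ab.1 * g ab.2) :=
    hgsum.mul_of_nonneg hgsum hgnn hgnn
  have h2pow : ∀ n : ℕ, (n:ℝ) + 1 ≤ 2 ^ n := by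
    intro n
    exact_mod_cast Nat.succ_le_of_lt (Nat.lt_two_pow_self (n := n))
  -- pointwise bound
  have habs : ∀ a b : ℕ, |f (a,b)| ≤ (1/(p:ℝ)) ^ (max a b) * (g a * g b) := by
    intro a b
    have hfa' : (0:ℝ) < a.factorial := by exact_mod_cast Nat.factorial_pos a
    have hfb' : (0:ℝ) < b.factorial := by exact_mod_cast Nat.factorial_pos b
    have e1 : ((p:ℝ) ^ (min a b) / (p:ℝ) ^ (a+b)) = (1/(p:ℝ)) ^ (max a b) := by
      rw [← min_add_max a b, pow_add, one_div_pow]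
      rw [eq_div_iff (by positivity)]
      field_simp
    have ta := tauZero_bounds hp (a - min a b)
    have tb := tauZero_bounds hp (b - min a b)
    have hta2 : tauZero (p ^ (a - min a b)) ≤ 2 ^ a := by
      refine ta.2.trans ?_
      have h1 : ((a - min a b : ℕ) : ℝ) ≤ a := by exact_mod_cast Nat.sub_le a (min a b)
      have h2 := h2pow a
      linarith
    have htb2 : tauZero (p ^ (b - min a b)) ≤ 2 ^ b := by
      refine tb.2.trans ?_
      have h1 : ((b - min a b : ℕ) : ℝ) ≤ b := by exact_mod_cast Nat.sub_le b (min a b)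
      have h2 := h2pow b
      linarith
    have heq : |f (a,b)| = (1/(p:ℝ))^(max a b) * tauZero (p ^ (a - min a b)) *
        tauZero (p ^ (b - min a b)) * |c|^(a+b) / ((a.factorial : ℝ) * b.factorial) := by
      rw [hfdef]
      dsimp only
      rw [e1, abs_div, abs_mul, abs_mul, abs_mul, abs_pow, abs_pow,
        abs_of_nonneg hq0, abs_of_nonneg ta.1, abs_of_nonneg tb.1,
        abs_of_nonneg (show (0:ℝ) ≤ (a.factorial : ℝ) * b.factorial by positivity)]
    rw [heq]
    have hcp : |c| ^ (a+b) ≤ 1 := pow_le_one₀ (abs_nonneg c) hc1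
    calc (1/(p:ℝ))^(max a b) * tauZero (p ^ (a - min a b)) *
        tauZero (p ^ (b - min a b)) * |c|^(a+b) / ((a.factorial : ℝ) * b.factorial)
        ≤ (1/(p:ℝ))^(max a b) * 2^a * 2^b * 1 / ((a.factorial : ℝ) * b.factorial) := by
          gcongr <;> first
            | exact ta.1
            | exact tb.1
            | exact hta2
            | exact htb2
            | exact hcp
            | positivity
      _ = (1/(p:ℝ))^(max a b) * (g a * g b) := by
          rw [hgdef]
          field_simp
          try ring
  have hfs : Summable f := by
    apply Summable.of_norm_bounded hG
    rintro ⟨a, b⟩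
    rw [Real.norm_eq_abs]
    refine (habs a b).trans ?_
    have h1 : (1/(p:ℝ)) ^ (max a b) ≤ 1 := pow_le_one₀ hq0 hq1
    nlinarith [mul_nonneg (hgnn a) (hgnn b)]
  set S : Finset (ℕ × ℕ) := {(0,0),(1,0),(0,1),(1,1)} with hS
  set Sc : Set (ℕ × ℕ) := (↑S : Set (ℕ×ℕ))ᶜ with hSc
  have hsplit := Summable.tsum_add_tsum_compl (s := (↑S : Set (ℕ×ℕ))) (f := f)
    (hfs.subtype _) (hfs.subtype _)
  have hfin : (∑' x : (↑S : Set (ℕ×ℕ)), f x) = ∑ x ∈ S, f x := Finset.tsum_subtype S f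
  have tz1 : tauZero 1 = 1 := by simp [tauZero]
  have hsum4 : ∑ x ∈ S, f x = 1 + 2 * c / p * tauZero p + c^2/p := by
    rw [hS]
    rw [Finset.sum_insert (by decide), Finset.sum_insert (by decide),
      Finset.sum_insert (by decide), Finset.sum_singleton]
    rw [hfdef]
    norm_num [tz1, Nat.factorial]
    field_simp
    ring
  -- main term estimate
  have Tdef : tauZero p = 1 + (1 - 1/(p:ℝ))/(1+1/(p:ℝ)) := by
    have := tauZero_prime_pow hp 1
    simpa using this
  have hd0 : (0:ℝ) < 1 + 1/(p:ℝ) := by positivity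
  have hT2 : tauZero p - 2 = -(2*(1/(p:ℝ))) / (1+1/(p:ℝ)) := by
    rw [Tdef]
    field_simp
    ring
  have habsT : |tauZero p - 2| ≤ 2/(p:ℝ) := by
    rw [hT2, abs_div, abs_neg, abs_of_nonneg (by positivity : (0:ℝ) ≤ 2*(1/(p:ℝ))),
      abs_of_pos hd0]
    calc 2*(1/(p:ℝ)) / (1+1/(p:ℝ)) ≤ 2*(1/(p:ℝ)) :=
          div_le_self (by positivity) (by linarith)
      _ = 2/(p:ℝ) := by ring
  have hmain : |(1 + 2 * c / (p:ℝ) * tauZero p + c^2/(p:ℝ)) - (1 + (4*c+c^2)/(p:ℝ))|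
      ≤ 4/(p:ℝ)^2 := by
    have e : (1 + 2 * c / (p:ℝ) * tauZero p + c^2/(p:ℝ)) - (1 + (4*c+c^2)/(p:ℝ))
        = (2*c/(p:ℝ)) * (tauZero p - 2) := by
      field_simp
      ring
    rw [e, abs_mul]
    have h4 : |2*c/(p:ℝ)| ≤ 2/(p:ℝ) := by
      rw [abs_div, abs_of_pos hp0]
      gcongr
      calc |2*c| = 2*|c| := by rw [abs_mul, abs_two]
        _ ≤ 2 := by linarith
    calc |2*c/(p:ℝ)| * |tauZero p - 2| ≤ (2/(p:ℝ)) * (2/(p:ℝ)) :=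
          mul_le_mul h4 habsT (abs_nonneg _) (by positivity)
      _ = 4/(p:ℝ)^2 := by ring
  -- tail estimate
  have hmaxS : ∀ x : ℕ × ℕ, x ∉ (↑S : Set (ℕ×ℕ)) → 2 ≤ max x.1 x.2 := by
    rintro ⟨a,b⟩ hx
    by_contra h
    push_neg at h
    have hm : max a b ≤ 1 := Nat.lt_succ_iff.mp h
    have ha : a ≤ 1 := le_trans (le_max_left a b) hm
    have hb : b ≤ 1 := le_trans (le_max_right a b) hm
    apply hx
    simp only [hS, Finset.coe_insert, Set.mem_insert_iff, Finset.coe_singleton,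
      Set.mem_singleton_iff, Prod.mk.injEq, Prod.ext_iff]
    omega
  have hcomplbd : ∀ x : Sc, |f ↑x| ≤ (1/(p:ℝ))^2 * (g (x:ℕ×ℕ).1 * g (x:ℕ×ℕ).2) := by
    rintro ⟨⟨a,b⟩, hx⟩
    refine (habs a b).trans ?_
    have h2 : (1/(p:ℝ))^(max a b) ≤ (1/(p:ℝ))^2 :=
      pow_le_pow_of_le_one hq0 hq1 (hmaxS (a,b) hx)
    exact mul_le_mul_of_nonneg_right h2 (mul_nonneg (hgnn a) (hgnn b))
  have hGg : ∑' n, g n = Real.exp 2 := by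
    rw [Real.exp_eq_exp_ℝ, NormedSpace.exp_eq_tsum_div]
  have hGnorm : Summable fun n => ‖g n‖ := by
    have e : (fun n => ‖g n‖) = g := funext fun n => by
      rw [Real.norm_eq_abs, abs_of_nonneg (hgnn n)]
    rw [e]; exact hgsum
  have hGG : ∑' ab : ℕ×ℕ, g ab.1 * g ab.2 = Real.exp 2 * Real.exp 2 := by
    rw [← hGg, tsum_mul_tsum_of_summable_norm hGnorm hGnorm]
  have hexp : Real.exp 2 ≤ 9 := by
    have h1 : Real.exp 1 ≤ 3 := le_of_lt (lt_trans Real.exp_one_lt_d9 (by norm_num))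
    have h2 : Real.exp 2 = Real.exp 1 * Real.exp 1 := by
      rw [← Real.exp_add]; norm_num
    nlinarith [Real.exp_pos 1]
  have hGG81 : ∑' ab : ℕ×ℕ, g ab.1 * g ab.2 ≤ 81 := by
    rw [hGG]; nlinarith [Real.exp_pos 2]
  have hsubabs : Summable (fun x : Sc => |f ↑x|) := (hfs.subtype _).abs
  have htail : |∑' x : Sc, f ↑x| ≤ 81/(p:ℝ)^2 := by
    have h1 : |∑' x : Sc, f ↑x| ≤ ∑' x : Sc, |f ↑x| := by
      have := norm_tsum_le_tsum_norm (f := fun x : Sc => f ↑x)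
        (by simpa only [Real.norm_eq_abs] using hsubabs)
      simpa only [Real.norm_eq_abs] using this
    have h2 : ∑' x : Sc, |f ↑x|
        ≤ ∑' x : Sc, (1/(p:ℝ))^2 * (g (x:ℕ×ℕ).1 * g (x:ℕ×ℕ).2) :=
      Summable.tsum_le_tsum hcomplbd hsubabs ((hG.subtype _).mul_left _)
    have h3 : ∑' x : Sc, (1/(p:ℝ))^2 * (g (x:ℕ×ℕ).1 * g (x:ℕ×ℕ).2)
        = (1/(p:ℝ))^2 * ∑' x : Sc, (g (x:ℕ×ℕ).1 * g (x:ℕ×ℕ).2) :=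
      tsum_mul_left
    have h4 : ∑' x : Sc, (g (x:ℕ×ℕ).1 * g (x:ℕ×ℕ).2)
        ≤ ∑' ab : ℕ×ℕ, g ab.1 * g ab.2 :=
      Summable.tsum_subtype_le (fun ab : ℕ×ℕ => g ab.1 * g ab.2) _
        (fun ab => mul_nonneg (hgnn ab.1) (hgnn ab.2)) hG
    have h5 : (1/(p:ℝ))^2 * ∑' x : Sc, (g (x:ℕ×ℕ).1 * g (x:ℕ×ℕ).2)
        ≤ (1/(p:ℝ))^2 * 81 :=
      mul_le_mul_of_nonneg_left (h4.trans hGG81) (by positivity)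
    have h6 : (1/(p:ℝ))^2 * 81 = 81/(p:ℝ)^2 := by field_simp
    calc |∑' x : Sc, f ↑x| ≤ ∑' x : Sc, |f ↑x| := h1
      _ ≤ ∑' x : Sc, (1/(p:ℝ))^2 * (g (x:ℕ×ℕ).1 * g (x:ℕ×ℕ).2) := h2
      _ = (1/(p:ℝ))^2 * ∑' x : Sc, (g (x:ℕ×ℕ).1 * g (x:ℕ×ℕ).2) := h3
      _ ≤ (1/(p:ℝ))^2 * 81 := h5
      _ = 81/(p:ℝ)^2 := h6
  -- assembly
  rw [← hsplit, hfin, hsum4]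
  have e : (1 + 2 * c / (p:ℝ) * tauZero p + c^2/(p:ℝ) + ∑' x : Sc, f ↑x)
      - (1 + (4*c+c^2)/(p:ℝ))
      = ((1 + 2 * c / (p:ℝ) * tauZero p + c^2/(p:ℝ)) - (1 + (4*c+c^2)/(p:ℝ)))
        + ∑' x : Sc, f ↑x := by ring
  rw [e]
  calc |((1 + 2 * c / (p:ℝ) * tauZero p + c^2/(p:ℝ)) - (1 + (4*c+c^2)/(p:ℝ)))
        + ∑' x : Sc, f ↑x|
      ≤ |(1 + 2 * c / (p:ℝ) * tauZero p + c^2/(p:ℝ)) - (1 + (4*c+c^2)/(p:ℝ))|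
        + |∑' x : Sc, f ↑x| := abs_add_le _ _
    _ ≤ 4/(p:ℝ)^2 + 81/(p:ℝ)^2 := add_le_add hmain htail
    _ ≤ 100/(p:ℝ)^2 := by
        rw [← add_div]
        gcongr
        norm_num
end
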